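/- arXiv:1902.07529 — 6 statements merged into one kernel-verified Lean document; each statement's English description precedes it below -/
import Mathlib

section
/- Let n ≥ 1 and let C_1,…,C_n and Z_1,…,Z_n be finite nonempty types. Let p be a probability distribution on (C_1×⋯×C_n)×(Z_1×⋯×Z_n), interpreted as the joint law of outputs C = (C_1,…,C_n) and inputs Z = (Z_1,…,Z_n), and let α > 1. Assume the Markov (input non-signaling) condition: for every i and every past realization (c_{<i}, z_{<i}) of positive probability and every z_i with P(Z_{<i} = z_{<i}) > 0, one has P(Z_i = z_i | C_{<i} = c_{<i}, Z_{<i} = z_{<i}) = P(Z_i = z_i | Z_{<i} = z_{<i}). Assume further that for every i and every positive-probability history (c_{<i}, z_{<i}) there is a nonnegative function F_i(·,·; c_{<i}, z_{<i}) on C_i×Z_i satisfying the single-trial PEF inequality Σ_{(c_i,z_i)} F_i(c_i,z_i; c_{<i},z_{<i}) · P(C_i=c_i | Z_i=z_i, C_{<i}=c_{<i}, Z_{<i}=z_{<i})^{α−1} · P(C_i=c_i, Z_i=z_i | C_{<i}=c_{<i}, Z_{<i}=z_{<i}) ≤ 1, where the sum ranges over pairs for which the conditioning events have positive probability. Then the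 product is a PEF for the full sequence: Σ_{(c,z) : P(Z=z)>0} [∏_{i=1}^n F_i(c_i,z_i; c_{<i},z_{<i})] · P(C=c | Z=z)^{α−1} · P(C=c, Z=z) ≤ 1. -/
open scoped Classical

/-- The probability of an event `E` under the finitely supported distribution `p`. -/
noncomputable def prOf {Ω : Type*} [Fintype Ω] (p : Ω → ℝ) (E : Ω → Prop) : ℝ :=
  ∑ ω, if E ω then p ω else 0

section PrOfLemmas

variable {Ω : Type*} [Fintype Ω]

theorem prOf_nonneg' {p : Ω → ℝ} (hp0 : ∀ ω, 0 ≤ p ω) (E : Ω → Prop) : 0 ≤ prOf p E :=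
  Finset.sum_nonneg fun ω _ => by by_cases h : E ω <;> simp [h, hp0 ω]

theorem prOf_congr' (p : Ω → ℝ) {E E' : Ω → Prop} (h : ∀ ω, E ω ↔ E' ω) :
    prOf p E = prOf p E' :=
  Finset.sum_congr rfl fun ω _ => if_congr (h ω) rfl rfl

theorem prOf_mono' {p : Ω → ℝ} (hp0 : ∀ ω, 0 ≤ p ω) {E E' : Ω → Prop}
    (h : ∀ ω, E ω → E' ω) : prOf p E ≤ prOf p E' := by
  refine Finset.sum_le_sum fun ω _ => ?_
  by_cases hE : E ω
  · simp [hE, h ω hE]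
  · simp only [if_neg hE]
    by_cases hE' : E' ω <;> simp [hE', hp0 ω]

theorem prOf_true' {p : Ω → ℝ} (hp1 : ∑ ω, p ω = 1) {E : Ω → Prop} (h : ∀ ω, E ω) :
    prOf p E = 1 := by
  rw [prOf, Finset.sum_congr rfl fun ω _ => if_pos (h ω)]; exact hp1

theorem prOf_single (p : Ω → ℝ) (ω0 : Ω) : prOf p (fun ω => ω = ω0) = p ω0 := by
  rw [prOf, Finset.sum_ite_eq' Finset.univ ω0 p, if_pos (Finset.mem_univ ω0)]

end PrOfLemmas

theorem sum_update' {ι : Type*} [Fintype ι] [DecidableEq ι] {β : ι → Type*}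
    [∀ j, Fintype (β j)] (i : ι) (f : (∀ j, β j) → ℝ) :
    ∑ xi : β i, ∑ x : ∀ j, β j, f (Function.update x i xi)
      = (Fintype.card (β i) : ℝ) * ∑ x, f x := by
  have hinv : Function.Involutive
      (fun q : β i × (∀ j, β j) => (q.2 i, Function.update q.2 i q.1)) := by
    rintro ⟨xi, x⟩
    simp [Function.update_idem, Function.update_self, Function.update_eq_self]
  calc ∑ xi : β i, ∑ x : ∀ j, β j, f (Function.update x i xi)
      = ∑ q : β i × (∀ j, β j), f (Function.update q.2 i q.1) := by
        rw [Fintype.sum_prod_type]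
    _ = ∑ q : β i × (∀ j, β j), f q.2 :=
        Fintype.sum_equiv hinv.toPerm _ _ fun q => rfl
    _ = (Fintype.card (β i) : ℝ) * ∑ x, f x := by
        rw [Fintype.sum_prod_type]
        simp [Finset.sum_const, nsmul_eq_mul]

theorem sum_swap4 {A B C D : Type*} [Fintype A] [Fintype B] [Fintype C] [Fintype D]
    (f : A → B → C → D → ℝ) :
    ∑ a, ∑ b, ∑ c, ∑ d, f a b c d = ∑ b, ∑ d, ∑ a, ∑ c, f a b c d := by
  calc ∑ a, ∑ b, ∑ c, ∑ d, f a b c d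
      = ∑ b, ∑ a, ∑ c, ∑ d, f a b c d := Finset.sum_comm
    _ = ∑ b, ∑ a, ∑ d, ∑ c, f a b c d :=
        Finset.sum_congr rfl fun b _ => Finset.sum_congr rfl fun a _ => Finset.sum_comm
    _ = ∑ b, ∑ d, ∑ a, ∑ c, f a b c d :=
        Finset.sum_congr rfl fun b _ => Finset.sum_comm

theorem chain_alg (α Fi phiK A A' B B' D : ℝ) (hA : 0 < A) (hB : 0 < B) (hD : 0 < D)
    (hA' : 0 ≤ A') (hB' : B' = D * B / A) :
    Fi * phiK * (A' / B') ^ (α - 1) * A'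
      = Fi * (A' / D) ^ (α - 1) * (A' / A) * (phiK * (A / B) ^ (α - 1) * A) := by
  have e1 : A' / B' = (A' / D) * (A / B) := by
    rw [hB']; field_simp
  rw [e1, Real.mul_rpow (div_nonneg hA' hD.le) (div_nonneg hA.le hB.le)]
  field_simp

section Main

variable {n : ℕ} {C Z : Fin n → Type*}
variable [∀ i, Fintype (C i)] [∀ i, Fintype (Z i)]

/-- P(C_{<k} = c_{<k}, Z_{<k} = z_{<k}) -/
noncomputable def pCZ (p : ((∀ i, C i) × (∀ i, Z i)) → ℝ) (k : ℕ)
    (c : ∀ i, C i) (z : ∀ i, Z i) : ℝ :=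
  prOf p fun ω => ∀ j : Fin n, (j : ℕ) < k → ω.1 j = c j ∧ ω.2 j = z j

/-- P(Z_{<k} = z_{<k}) -/
noncomputable def pZ (p : ((∀ i, C i) × (∀ i, Z i)) → ℝ) (k : ℕ) (z : ∀ i, Z i) : ℝ :=
  prOf p fun ω => ∀ j : Fin n, (j : ℕ) < k → ω.2 j = z j

/-- product of the first k estimation factors -/
noncomputable def phi
    (F : ∀ i : Fin n, C i → Z i → (∀ j : Fin n, j < i → C j) → (∀ j : Fin n, j < i → Z j) → ℝ)
    (k : ℕ) (c : ∀ i, C i) (z : ∀ i, Z i) : ℝ :=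
  ∏ j : Fin n,
    if (j : ℕ) < k then F j (c j) (z j) (fun j' _ => c j') (fun j' _ => z j') else 1

noncomputable def wgt (p : ((∀ i, C i) × (∀ i, Z i)) → ℝ) (α : ℝ)
    (F : ∀ i : Fin n, C i → Z i → (∀ j : Fin n, j < i → C j) → (∀ j : Fin n, j < i → Z j) → ℝ)
    (k : ℕ) (c : ∀ i, C i) (z : ∀ i, Z i) : ℝ :=
  if 0 < pZ p k z then
    phi F k c z * (pCZ p k c z / pZ p k z) ^ (α - 1) * pCZ p k c z
  else 0

noncomputable def sterm (p : ((∀ i, C i) × (∀ i, Z i)) → ℝ) (α : ℝ)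
    (F : ∀ i : Fin n, C i → Z i → (∀ j : Fin n, j < i → C j) → (∀ j : Fin n, j < i → Z j) → ℝ)
    (i : Fin n) (c : ∀ i, C i) (z : ∀ i, Z i) : ℝ :=
  if 0 < prOf p (fun ω => ω.2 i = z i ∧ ∀ j (h : j < i), ω.1 j = c j ∧ ω.2 j = z j) then
    F i (c i) (z i) (fun j _ => c j) (fun j _ => z j) *
      (prOf p (fun ω => ω.1 i = c i ∧ ω.2 i = z i ∧
          ∀ j (h : j < i), ω.1 j = c j ∧ ω.2 j = z j) /
        prOf p (fun ω => ω.2 i = z i ∧ ∀ j (h : j < i), ω.1 j = c j ∧ ω.2 j = z j)) ^ (α - 1) *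
      (prOf p (fun ω => ω.1 i = c i ∧ ω.2 i = z i ∧
          ∀ j (h : j < i), ω.1 j = c j ∧ ω.2 j = z j) /
        prOf p (fun ω => ∀ j (h : j < i), ω.1 j = c j ∧ ω.2 j = z j))
  else 0

noncomputable def bigN (C Z : Fin n → Type*) [∀ i, Fintype (C i)] [∀ i, Fintype (Z i)]
    (k : ℕ) : ℝ :=
  ∏ j : Fin n,
    if (j : ℕ) < k then 1 else (Fintype.card (C j) * Fintype.card (Z j) : ℝ)

variable (p : ((∀ i, C i) × (∀ i, Z i)) → ℝ) (α : ℝ)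
  (F : ∀ i : Fin n, C i → Z i → (∀ j : Fin n, j < i → C j) → (∀ j : Fin n, j < i → Z j) → ℝ)

theorem phi_nonneg (hF0 : ∀ i ci zi cpre zpre, 0 ≤ F i ci zi cpre zpre) (k : ℕ)
    (c : ∀ i, C i) (z : ∀ i, Z i) : 0 ≤ phi F k c z :=
  Finset.prod_nonneg fun j _ => by
    by_cases h : (j : ℕ) < k
    · rw [if_pos h]; exact hF0 _ _ _ _ _
    · rw [if_neg h]; exact zero_le_one

theorem wgt_nonneg (hp0 : ∀ ω, 0 ≤ p ω)
    (hF0 : ∀ i ci zi cpre zpre, 0 ≤ F i ci zi cpre zpre) (k : ℕ)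
    (c : ∀ i, C i) (z : ∀ i, Z i) : 0 ≤ wgt p α F k c z := by
  unfold wgt
  split
  · exact mul_nonneg (mul_nonneg (phi_nonneg F hF0 k c z)
      (Real.rpow_nonneg (div_nonneg (prOf_nonneg' hp0 _) (prOf_nonneg' hp0 _)) _))
      (prOf_nonneg' hp0 _)
  · exact le_refl 0

theorem sterm_nonneg (hp0 : ∀ ω, 0 ≤ p ω)
    (hF0 : ∀ i ci zi cpre zpre, 0 ≤ F i ci zi cpre zpre) (i : Fin n)
    (c : ∀ i, C i) (z : ∀ i, Z i) : 0 ≤ sterm p α F i c z := by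
  unfold sterm
  split
  · exact mul_nonneg (mul_nonneg (hF0 _ _ _ _ _)
      (Real.rpow_nonneg (div_nonneg (prOf_nonneg' hp0 _) (prOf_nonneg' hp0 _)) _))
      (div_nonneg (prOf_nonneg' hp0 _) (prOf_nonneg' hp0 _))
  · exact le_refl 0

theorem wgt_zero (k : ℕ) (c : ∀ i, C i) (z : ∀ i, Z i)
    (h : pCZ p k c z = 0) : wgt p α F k c z = 0 := by
  unfold wgt
  split
  · rw [h, mul_zero]
  · rfl

theorem phi_succ (i : Fin n) (c : ∀ i, C i) (z : ∀ i, Z i) :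
    phi F ((i : ℕ) + 1) c z
      = F i (c i) (z i) (fun j _ => c j) (fun j _ => z j) * phi F (i : ℕ) c z := by
  unfold phi
  rw [Finset.prod_eq_mul_prod_sdiff_singleton_of_mem (Finset.mem_univ i),
    Finset.prod_eq_mul_prod_sdiff_singleton_of_mem (Finset.mem_univ i)
      (fun j => if (j : ℕ) < (i : ℕ) then
        F j (c j) (z j) (fun j' _ => c j') (fun j' _ => z j') else 1)]
  rw [if_pos (Nat.lt_succ_self _), if_neg (lt_irrefl (i : ℕ)), one_mul]
  congr 1
  refine Finset.prod_congr rfl fun j hj => ?_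
  have hji : j ≠ i := by simpa using (Finset.mem_sdiff.mp hj).2
  have hne : (j : ℕ) ≠ (i : ℕ) := fun h => hji (Fin.val_injective h)
  exact if_congr ⟨fun h => by omega, fun h => by omega⟩ rfl rfl

end Main

section Main2

variable {n : ℕ} {C Z : Fin n → Type*}
variable [∀ i, Fintype (C i)] [∀ i, Fintype (Z i)]
variable (p : ((∀ i, C i) × (∀ i, Z i)) → ℝ) (α : ℝ)
  (F : ∀ i : Fin n, C i → Z i → (∀ j : Fin n, j < i → C j) → (∀ j : Fin n, j < i → Z j) → ℝ)

theorem wgt_update (i : Fin n) (ci : C i) (zi : Z i) (c : ∀ i, C i) (z : ∀ i, Z i) :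
    wgt p α F (i : ℕ) (Function.update c i ci) (Function.update z i zi)
      = wgt p α F (i : ℕ) c z := by
  have hc : ∀ j : Fin n, (j : ℕ) < (i : ℕ) → Function.update c i ci j = c j :=
    fun j h => Function.update_of_ne (Fin.ne_of_val_ne (Nat.ne_of_lt h)) _ _
  have hz : ∀ j : Fin n, (j : ℕ) < (i : ℕ) → Function.update z i zi j = z j :=
    fun j h => Function.update_of_ne (Fin.ne_of_val_ne (Nat.ne_of_lt h)) _ _
  have h1 : pZ p (i : ℕ) (Function.update z i zi) = pZ p (i : ℕ) z :=
    prOf_congr' p fun ω =>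
      ⟨fun H j hj => by rw [← hz j hj]; exact H j hj,
       fun H j hj => by rw [hz j hj]; exact H j hj⟩
  have h2 : pCZ p (i : ℕ) (Function.update c i ci) (Function.update z i zi)
      = pCZ p (i : ℕ) c z :=
    prOf_congr' p fun ω =>
      ⟨fun H j hj => by rw [← hc j hj, ← hz j hj]; exact H j hj,
       fun H j hj => by rw [hc j hj, hz j hj]; exact H j hj⟩
  have h3 : phi F (i : ℕ) (Function.update c i ci) (Function.update z i zi)
      = phi F (i : ℕ) c z := by
    refine Finset.prod_congr rfl fun j _ => ?_
    by_cases hj : (j : ℕ) < (i : ℕ)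
    · rw [if_pos hj, if_pos hj, hc j hj, hz j hj]
      have e1 : (fun j' (_ : j' < j) => Function.update c i ci j')
          = (fun j' (_ : j' < j) => c j') :=
        funext fun j' => funext fun h' => hc j' (Nat.lt_trans h' hj)
      have e2 : (fun j' (_ : j' < j) => Function.update z i zi j')
          = (fun j' (_ : j' < j) => z j') :=
        funext fun j' => funext fun h' => hz j' (Nat.lt_trans h' hj)
      rw [e1, e2]
    · rw [if_neg hj, if_neg hj]
  unfold wgt
  rw [h1, h2, h3]

theorem sterm_update (i : Fin n) (ci : C i) (zi : Z i) (c : ∀ i, C i) (z : ∀ i, Z i) :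
    sterm p α F i (Function.update c i ci) (Function.update z i zi)
      = (if 0 < prOf p (fun ω => ω.2 i = zi ∧
              ∀ j (h : j < i), ω.1 j = c j ∧ ω.2 j = z j) then
          F i ci zi (fun j _ => c j) (fun j _ => z j) *
            (prOf p (fun ω => ω.1 i = ci ∧ ω.2 i = zi ∧
                ∀ j (h : j < i), ω.1 j = c j ∧ ω.2 j = z j) /
              prOf p (fun ω => ω.2 i = zi ∧
                ∀ j (h : j < i), ω.1 j = c j ∧ ω.2 j = z j)) ^ (α - 1) *
            (prOf p (fun ω => ω.1 i = ci ∧ ω.2 i = zi ∧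
                ∀ j (h : j < i), ω.1 j = c j ∧ ω.2 j = z j) /
              prOf p (fun ω => ∀ j (h : j < i), ω.1 j = c j ∧ ω.2 j = z j))
        else 0) := by
  have hc : ∀ j : Fin n, j < i → Function.update c i ci j = c j :=
    fun j h => Function.update_of_ne (Fin.ne_of_lt h) _ _
  have hz : ∀ j : Fin n, j < i → Function.update z i zi j = z j :=
    fun j h => Function.update_of_ne (Fin.ne_of_lt h) _ _
  have hiff : ∀ ω : ((∀ i, C i) × (∀ i, Z i)),
      (∀ j (h : j < i), ω.1 j = Function.update c i ci j
          ∧ ω.2 j = Function.update z i zi j)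
        ↔ (∀ j (h : j < i), ω.1 j = c j ∧ ω.2 j = z j) :=
    fun ω =>
      ⟨fun H j h => by rw [← hc j h, ← hz j h]; exact H j h,
       fun H j h => by rw [hc j h, hz j h]; exact H j h⟩
  unfold sterm
  rw [Function.update_self, Function.update_self]
  have ev1 : prOf p (fun ω => ω.2 i = zi ∧ ∀ j (h : j < i),
        ω.1 j = Function.update c i ci j ∧ ω.2 j = Function.update z i zi j)
      = prOf p (fun ω => ω.2 i = zi ∧ ∀ j (h : j < i), ω.1 j = c j ∧ ω.2 j = z j) :=
    prOf_congr' p fun ω => and_congr_right fun _ => hiff ω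
  have ev2 : prOf p (fun ω => ω.1 i = ci ∧ ω.2 i = zi ∧ ∀ j (h : j < i),
        ω.1 j = Function.update c i ci j ∧ ω.2 j = Function.update z i zi j)
      = prOf p (fun ω => ω.1 i = ci ∧ ω.2 i = zi ∧
          ∀ j (h : j < i), ω.1 j = c j ∧ ω.2 j = z j) :=
    prOf_congr' p fun ω => and_congr_right fun _ => and_congr_right fun _ => hiff ω
  have ev3 : prOf p (fun ω => ∀ j (h : j < i),
        ω.1 j = Function.update c i ci j ∧ ω.2 j = Function.update z i zi j)
      = prOf p (fun ω => ∀ j (h : j < i), ω.1 j = c j ∧ ω.2 j = z j) :=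
    prOf_congr' p fun ω => hiff ω
  have lam1 : (fun j (_ : j < i) => Function.update c i ci j)
      = (fun j (_ : j < i) => c j) :=
    funext fun j => funext fun h => hc j h
  have lam2 : (fun j (_ : j < i) => Function.update z i zi j)
      = (fun j (_ : j < i) => z j) :=
    funext fun j => funext fun h => hz j h
  rw [ev1, ev2, ev3, lam1, lam2]

theorem eventCZ_succ_iff (i : Fin n) (c : ∀ i, C i) (z : ∀ i, Z i)
    (ω : ((∀ i, C i) × (∀ i, Z i))) :
    (∀ j : Fin n, (j : ℕ) < (i : ℕ) + 1 → ω.1 j = c j ∧ ω.2 j = z j)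
      ↔ (ω.1 i = c i ∧ ω.2 i = z i ∧ ∀ j (h : j < i), ω.1 j = c j ∧ ω.2 j = z j) := by
  constructor
  · intro H
    exact ⟨(H i (Nat.lt_succ_self _)).1, (H i (Nat.lt_succ_self _)).2,
      fun j h => H j (Nat.lt_succ_of_lt h)⟩
  · rintro ⟨h1, h2, h3⟩ j hj
    rcases Nat.lt_succ_iff_lt_or_eq.mp hj with h | h
    · exact h3 j h
    · have : j = i := Fin.val_injective h
      subst this; exact ⟨h1, h2⟩

theorem eventZ_succ_iff (i : Fin n) (z : ∀ i, Z i)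
    (ω : ((∀ i, C i) × (∀ i, Z i))) :
    (∀ j : Fin n, (j : ℕ) < (i : ℕ) + 1 → ω.2 j = z j)
      ↔ (ω.2 i = z i ∧ ∀ j (h : j < i), ω.2 j = z j) := by
  constructor
  · intro H
    exact ⟨H i (Nat.lt_succ_self _), fun j h => H j (Nat.lt_succ_of_lt h)⟩
  · rintro ⟨h1, h2⟩ j hj
    rcases Nat.lt_succ_iff_lt_or_eq.mp hj with h | h
    · exact h2 j h
    · have : j = i := Fin.val_injective h
      subst this; exact h1

end Main2

section Main3

variable {n : ℕ} {C Z : Fin n → Type*}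
variable [∀ i, Fintype (C i)] [∀ i, Fintype (Z i)]
variable (p : ((∀ i, C i) × (∀ i, Z i)) → ℝ) (α : ℝ)
  (F : ∀ i : Fin n, C i → Z i → (∀ j : Fin n, j < i → C j) → (∀ j : Fin n, j < i → Z j) → ℝ)

theorem wgt_succ_le (hp0 : ∀ ω, 0 ≤ p ω)
    (hF0 : ∀ i ci zi cpre zpre, 0 ≤ F i ci zi cpre zpre)
    (hMarkov : ∀ (i : Fin n) (cpre : ∀ j : Fin n, j < i → C j)
        (zpre : ∀ j : Fin n, j < i → Z j) (zi : Z i),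
      0 < prOf p (fun ω => ∀ j (h : j < i), ω.1 j = cpre j h ∧ ω.2 j = zpre j h) →
      0 < prOf p (fun ω => ∀ j (h : j < i), ω.2 j = zpre j h) →
      prOf p (fun ω => ω.2 i = zi ∧ ∀ j (h : j < i), ω.1 j = cpre j h ∧ ω.2 j = zpre j h) /
          prOf p (fun ω => ∀ j (h : j < i), ω.1 j = cpre j h ∧ ω.2 j = zpre j h) =
        prOf p (fun ω => ω.2 i = zi ∧ ∀ j (h : j < i), ω.2 j = zpre j h) /
          prOf p (fun ω => ∀ j (h : j < i), ω.2 j = zpre j h))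
    (i : Fin n) (c : ∀ i, C i) (z : ∀ i, Z i) :
    wgt p α F ((i : ℕ) + 1) c z ≤ sterm p α F i c z * wgt p α F (i : ℕ) c z := by
  have hA0 : 0 ≤ pCZ p (i : ℕ) c z := prOf_nonneg' hp0 _
  have hA'0 : 0 ≤ pCZ p ((i : ℕ) + 1) c z := prOf_nonneg' hp0 _
  have hD0 : 0 ≤ prOf p (fun ω => ω.2 i = z i ∧
      ∀ j (h : j < i), ω.1 j = c j ∧ ω.2 j = z j) := prOf_nonneg' hp0 _
  have hmono1 : pCZ p ((i : ℕ) + 1) c z ≤ pCZ p (i : ℕ) c z :=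
    prOf_mono' hp0 fun ω H j hj => H j (Nat.lt_succ_of_lt hj)
  by_cases hA : 0 < pCZ p (i : ℕ) c z
  · -- positive history probability
    have hB : 0 < pZ p (i : ℕ) z :=
      lt_of_lt_of_le hA (prOf_mono' hp0 fun ω H j hj => (H j hj).2)
    by_cases hD : 0 < prOf p (fun ω => ω.2 i = z i ∧
        ∀ j (h : j < i), ω.1 j = c j ∧ ω.2 j = z j)
    · -- Markov condition applies
      have hAfin : 0 < prOf p
          (fun ω => ∀ j (h : j < i), ω.1 j = c j ∧ ω.2 j = z j) := hA
      have hBfin : 0 < prOf p (fun ω => ∀ j (h : j < i), ω.2 j = z j) := hB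
      have hM : prOf p (fun ω => ω.2 i = z i ∧
            ∀ j (h : j < i), ω.1 j = c j ∧ ω.2 j = z j) / pCZ p (i : ℕ) c z
          = prOf p (fun ω => ω.2 i = z i ∧ ∀ j (h : j < i), ω.2 j = z j) / pZ p (i : ℕ) z :=
        hMarkov i (fun j _ => c j) (fun j _ => z j) (z i) hAfin hBfin
      have hB'ev : pZ p ((i : ℕ) + 1) z
          = prOf p (fun ω => ω.2 i = z i ∧ ∀ j (h : j < i), ω.2 j = z j) :=
        prOf_congr' p fun ω => eventZ_succ_iff i z ω
      have hA'ev : pCZ p ((i : ℕ) + 1) c z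
          = prOf p (fun ω => ω.1 i = c i ∧ ω.2 i = z i ∧
              ∀ j (h : j < i), ω.1 j = c j ∧ ω.2 j = z j) :=
        prOf_congr' p fun ω => eventCZ_succ_iff i c z ω
      rw [← hB'ev] at hM
      have hDB : prOf p (fun ω => ω.2 i = z i ∧
            ∀ j (h : j < i), ω.1 j = c j ∧ ω.2 j = z j) * pZ p (i : ℕ) z
          = pZ p ((i : ℕ) + 1) z * pCZ p (i : ℕ) c z := by
        have := (div_eq_div_iff (ne_of_gt hA) (ne_of_gt hB)).mp hM
        linarith
      have hB'val : pZ p ((i : ℕ) + 1) z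
          = prOf p (fun ω => ω.2 i = z i ∧
              ∀ j (h : j < i), ω.1 j = c j ∧ ω.2 j = z j) * pZ p (i : ℕ) z
            / pCZ p (i : ℕ) c z := by
        rw [eq_div_iff (ne_of_gt hA)]; linarith
      have hB'pos : 0 < pZ p ((i : ℕ) + 1) z := by
        rw [hB'val]; positivity
      unfold wgt sterm
      rw [if_pos hB'pos, if_pos hB, if_pos hD, phi_succ, ← hA'ev]
      exact le_of_eq (chain_alg α _ _ _ _ _ _ _ hA hB hD hA'0 hB'val)
    · -- zero probability of the input value: both sides vanish
      have hDz : prOf p (fun ω => ω.2 i = z i ∧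
          ∀ j (h : j < i), ω.1 j = c j ∧ ω.2 j = z j) = 0 :=
        le_antisymm (not_lt.mp hD) hD0
      have hA'z : pCZ p ((i : ℕ) + 1) c z = 0 := by
        refine le_antisymm ?_ hA'0
        rw [← hDz]
        refine prOf_mono' hp0 fun ω H => ?_
        exact ⟨(H i (Nat.lt_succ_self _)).2, fun j h => H j (Nat.lt_succ_of_lt h)⟩
      have hL : wgt p α F ((i : ℕ) + 1) c z = 0 := by
        unfold wgt; rw [hA'z]; split
        · rw [mul_zero]
        · rfl
      have hS : sterm p α F i c z = 0 := by
        unfold sterm; rw [if_neg hD]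
      rw [hL, hS, zero_mul]
  · -- zero probability history: both sides vanish
    have hAz : pCZ p (i : ℕ) c z = 0 := le_antisymm (not_lt.mp hA) hA0
    have hA'z : pCZ p ((i : ℕ) + 1) c z = 0 :=
      le_antisymm (hAz ▸ hmono1) hA'0
    have hL : wgt p α F ((i : ℕ) + 1) c z = 0 := by
      unfold wgt; rw [hA'z]; split
      · rw [mul_zero]
      · rfl
    rw [hL]
    exact mul_nonneg (sterm_nonneg p α F hp0 hF0 i c z)
      (wgt_nonneg p α F hp0 hF0 (i : ℕ) c z)

end Main3

section Main4

variable {n : ℕ} {C Z : Fin n → Type*}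
variable [∀ i, Fintype (C i)] [∀ i, Fintype (Z i)]
variable (p : ((∀ i, C i) × (∀ i, Z i)) → ℝ) (α : ℝ)
  (F : ∀ i : Fin n, C i → Z i → (∀ j : Fin n, j < i → C j) → (∀ j : Fin n, j < i → Z j) → ℝ)

theorem step_le (hp0 : ∀ ω, 0 ≤ p ω)
    (hF0 : ∀ i ci zi cpre zpre, 0 ≤ F i ci zi cpre zpre)
    (hMarkov : ∀ (i : Fin n) (cpre : ∀ j : Fin n, j < i → C j)
        (zpre : ∀ j : Fin n, j < i → Z j) (zi : Z i),
      0 < prOf p (fun ω => ∀ j (h : j < i), ω.1 j = cpre j h ∧ ω.2 j = zpre j h) →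
      0 < prOf p (fun ω => ∀ j (h : j < i), ω.2 j = zpre j h) →
      prOf p (fun ω => ω.2 i = zi ∧ ∀ j (h : j < i), ω.1 j = cpre j h ∧ ω.2 j = zpre j h) /
          prOf p (fun ω => ∀ j (h : j < i), ω.1 j = cpre j h ∧ ω.2 j = zpre j h) =
        prOf p (fun ω => ω.2 i = zi ∧ ∀ j (h : j < i), ω.2 j = zpre j h) /
          prOf p (fun ω => ∀ j (h : j < i), ω.2 j = zpre j h))
    (hF : ∀ (i : Fin n) (cpre : ∀ j : Fin n, j < i → C j)
        (zpre : ∀ j : Fin n, j < i → Z j),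
      0 < prOf p (fun ω => ∀ j (h : j < i), ω.1 j = cpre j h ∧ ω.2 j = zpre j h) →
      ∑ ci : C i, ∑ zi : Z i,
        (if 0 < prOf p (fun ω => ω.2 i = zi ∧
              ∀ j (h : j < i), ω.1 j = cpre j h ∧ ω.2 j = zpre j h) then
          F i ci zi cpre zpre *
            (prOf p (fun ω => ω.1 i = ci ∧ ω.2 i = zi ∧
                ∀ j (h : j < i), ω.1 j = cpre j h ∧ ω.2 j = zpre j h) /
              prOf p (fun ω => ω.2 i = zi ∧
                ∀ j (h : j < i), ω.1 j = cpre j h ∧ ω.2 j = zpre j h)) ^ (α - 1) *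
            (prOf p (fun ω => ω.1 i = ci ∧ ω.2 i = zi ∧
                ∀ j (h : j < i), ω.1 j = cpre j h ∧ ω.2 j = zpre j h) /
              prOf p (fun ω => ∀ j (h : j < i), ω.1 j = cpre j h ∧ ω.2 j = zpre j h))
        else 0) ≤ 1)
    (i : Fin n) :
    ((Fintype.card (C i) : ℝ) * (Fintype.card (Z i) : ℝ)) *
        (∑ c, ∑ z, wgt p α F ((i : ℕ) + 1) c z)
      ≤ ∑ c, ∑ z, wgt p α F (i : ℕ) c z := by
  have h1 : (∑ c, ∑ z, wgt p α F ((i : ℕ) + 1) c z)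
      ≤ ∑ c, ∑ z, sterm p α F i c z * wgt p α F (i : ℕ) c z :=
    Finset.sum_le_sum fun c _ => Finset.sum_le_sum fun z _ =>
      wgt_succ_le p α F hp0 hF0 hMarkov i c z
  have hcard0 : (0:ℝ) ≤ (Fintype.card (C i) : ℝ) * (Fintype.card (Z i) : ℝ) := by positivity
  refine le_trans (mul_le_mul_of_nonneg_left h1 hcard0) ?_
  have hkey : ((Fintype.card (C i) : ℝ) * (Fintype.card (Z i) : ℝ)) *
        (∑ c, ∑ z, sterm p α F i c z * wgt p α F (i : ℕ) c z)
      = ∑ c, ∑ z, ∑ ci, ∑ zi,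
          sterm p α F i (Function.update c i ci) (Function.update z i zi) *
            wgt p α F (i : ℕ) (Function.update c i ci) (Function.update z i zi) := by
    calc ((Fintype.card (C i) : ℝ) * (Fintype.card (Z i) : ℝ)) *
          (∑ c, ∑ z, sterm p α F i c z * wgt p α F (i : ℕ) c z)
        = (Fintype.card (C i) : ℝ) *
            ∑ c, (Fintype.card (Z i) : ℝ) *
              ∑ z, sterm p α F i c z * wgt p α F (i : ℕ) c z := by
          rw [← Finset.mul_sum, ← mul_assoc]
      _ = (Fintype.card (C i) : ℝ) *
            ∑ c, ∑ zi, ∑ z, sterm p α F i c (Function.update z i zi) *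
              wgt p α F (i : ℕ) c (Function.update z i zi) := by
          refine congrArg _ (Finset.sum_congr rfl fun c _ => ?_)
          exact (sum_update' i fun z => sterm p α F i c z * wgt p α F (i : ℕ) c z).symm
      _ = ∑ ci, ∑ c, ∑ zi, ∑ z,
            sterm p α F i (Function.update c i ci) (Function.update z i zi) *
              wgt p α F (i : ℕ) (Function.update c i ci) (Function.update z i zi) :=
          (sum_update' i fun c => ∑ zi, ∑ z,
            sterm p α F i c (Function.update z i zi) *
              wgt p α F (i : ℕ) c (Function.update z i zi)).symm
      _ = ∑ c, ∑ z, ∑ ci, ∑ zi,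
            sterm p α F i (Function.update c i ci) (Function.update z i zi) *
              wgt p α F (i : ℕ) (Function.update c i ci) (Function.update z i zi) :=
          sum_swap4 _
  rw [hkey]
  refine Finset.sum_le_sum fun c _ => Finset.sum_le_sum fun z _ => ?_
  have hconst : ∑ ci, ∑ zi,
        sterm p α F i (Function.update c i ci) (Function.update z i zi) *
          wgt p α F (i : ℕ) (Function.update c i ci) (Function.update z i zi)
      = (∑ ci, ∑ zi, sterm p α F i (Function.update c i ci) (Function.update z i zi)) *
          wgt p α F (i : ℕ) c z := by
    rw [Finset.sum_mul]
    refine Finset.sum_congr rfl fun ci _ => ?_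
    rw [Finset.sum_mul]
    refine Finset.sum_congr rfl fun zi _ => ?_
    rw [wgt_update]
  rw [hconst]
  by_cases hA : 0 < pCZ p (i : ℕ) c z
  · have hFi := hF i (fun j _ => c j) (fun j _ => z j) hA
    have hS : (∑ ci, ∑ zi, sterm p α F i (Function.update c i ci) (Function.update z i zi)) ≤ 1 := by
      refine le_trans (le_of_eq ?_) hFi
      exact Finset.sum_congr rfl fun ci _ => Finset.sum_congr rfl fun zi _ =>
        sterm_update p α F i ci zi c z
    calc (∑ ci, ∑ zi, sterm p α F i (Function.update c i ci) (Function.update z i zi)) *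
          wgt p α F (i : ℕ) c z
        ≤ 1 * wgt p α F (i : ℕ) c z :=
          mul_le_mul_of_nonneg_right hS (wgt_nonneg p α F hp0 hF0 (i : ℕ) c z)
      _ = wgt p α F (i : ℕ) c z := one_mul _
  · have hw0 : wgt p α F (i : ℕ) c z = 0 :=
      wgt_zero p α F _ c z (le_antisymm (not_lt.mp hA) (prOf_nonneg' hp0 _))
    rw [hw0, mul_zero]

theorem base_eq (hp1 : ∑ ω, p ω = 1) (hα : 1 < α) :
    ∑ c, ∑ z, wgt p α F 0 c z = bigN C Z 0 := by
  have hw : ∀ (c : ∀ i, C i) (z : ∀ i, Z i), wgt p α F 0 c z = 1 := by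
    intro c z
    have h1 : pZ p 0 z = 1 := prOf_true' hp1 fun ω j h => absurd h (Nat.not_lt_zero _)
    have h2 : pCZ p 0 c z = 1 := prOf_true' hp1 fun ω j h => absurd h (Nat.not_lt_zero _)
    have h3 : phi F 0 c z = 1 :=
      Finset.prod_eq_one fun j _ => if_neg (Nat.not_lt_zero _)
    unfold wgt
    rw [h1, h2, h3, if_pos one_pos]
    norm_num
  calc ∑ c, ∑ z, wgt p α F 0 c z
      = ∑ _c : (∀ i, C i), ∑ _z : (∀ i, Z i), (1:ℝ) := by
        exact Finset.sum_congr rfl fun c _ => Finset.sum_congr rfl fun z _ => hw c z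
    _ = (Fintype.card (∀ i, C i) : ℝ) * (Fintype.card (∀ i, Z i) : ℝ) := by
        simp [Finset.sum_const, nsmul_eq_mul]
    _ = bigN C Z 0 := by
        unfold bigN
        simp only [Nat.not_lt_zero, if_false]
        rw [Fintype.card_pi, Fintype.card_pi]
        push_cast
        rw [Finset.prod_mul_distrib]

theorem bigN_succ (i : Fin n) :
    bigN C Z (i : ℕ)
      = ((Fintype.card (C i) : ℝ) * (Fintype.card (Z i) : ℝ)) * bigN C Z ((i : ℕ) + 1) := by
  unfold bigN
  rw [Finset.prod_eq_mul_prod_sdiff_singleton_of_mem (Finset.mem_univ i),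
    Finset.prod_eq_mul_prod_sdiff_singleton_of_mem (Finset.mem_univ i)
      (fun j => if (j : ℕ) < (i : ℕ) + 1 then 1
        else (Fintype.card (C j) * Fintype.card (Z j) : ℝ))]
  rw [if_neg (lt_irrefl (i : ℕ)), if_pos (Nat.lt_succ_self _), one_mul]
  push_cast
  congr 1
  refine Finset.prod_congr rfl fun j hj => ?_
  have hji : j ≠ i := by simpa using (Finset.mem_sdiff.mp hj).2
  have hne : (j : ℕ) ≠ (i : ℕ) := fun h => hji (Fin.val_injective h)
  exact if_congr ⟨fun h => by omega, fun h => by omega⟩ rfl rfl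

theorem bigN_n : bigN C Z n = 1 :=
  Finset.prod_eq_one fun j _ => if_pos j.isLt

end Main4

/-- Chaining of probability estimation factors (classical analog of Theorem 4.12 of
Knill–Zhang–Bierhorst).  `p` is the joint law of the outputs `C = (C₁, …, Cₙ)` and
inputs `Z = (Z₁, …, Zₙ)` of `n` trials.  Under the Markov (input non-signaling)
condition `P(Zᵢ = zᵢ | C_{<i} = c_{<i}, Z_{<i} = z_{<i}) = P(Zᵢ = zᵢ | Z_{<i} = z_{<i})`,
if for every positive-probability history the nonnegative function
`F i · · c_{<i} z_{<i}` satisfies the single-trial PEF inequality with power `α > 1`,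
then the product `∏ i, F i (cᵢ) (zᵢ) (c_{<i}) (z_{<i})` is a PEF with power `α` for the
full sequence. -/
theorem pef_chaining
    {n : ℕ} (hn : 1 ≤ n)
    (C Z : Fin n → Type*)
    [∀ i, Fintype (C i)] [∀ i, Nonempty (C i)]
    [∀ i, Fintype (Z i)] [∀ i, Nonempty (Z i)]
    (p : ((∀ i, C i) × (∀ i, Z i)) → ℝ)
    (hp0 : ∀ ω, 0 ≤ p ω) (hp1 : ∑ ω, p ω = 1)
    (α : ℝ) (hα : 1 < α)
    (hMarkov : ∀ (i : Fin n) (cpre : ∀ j : Fin n, j < i → C j)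
        (zpre : ∀ j : Fin n, j < i → Z j) (zi : Z i),
      0 < prOf p (fun ω => ∀ j (h : j < i), ω.1 j = cpre j h ∧ ω.2 j = zpre j h) →
      0 < prOf p (fun ω => ∀ j (h : j < i), ω.2 j = zpre j h) →
      prOf p (fun ω => ω.2 i = zi ∧ ∀ j (h : j < i), ω.1 j = cpre j h ∧ ω.2 j = zpre j h) /
          prOf p (fun ω => ∀ j (h : j < i), ω.1 j = cpre j h ∧ ω.2 j = zpre j h) =
        prOf p (fun ω => ω.2 i = zi ∧ ∀ j (h : j < i), ω.2 j = zpre j h) /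
          prOf p (fun ω => ∀ j (h : j < i), ω.2 j = zpre j h))
    (F : ∀ i : Fin n, C i → Z i →
      (∀ j : Fin n, j < i → C j) → (∀ j : Fin n, j < i → Z j) → ℝ)
    (hF0 : ∀ i ci zi cpre zpre, 0 ≤ F i ci zi cpre zpre)
    (hF : ∀ (i : Fin n) (cpre : ∀ j : Fin n, j < i → C j)
        (zpre : ∀ j : Fin n, j < i → Z j),
      0 < prOf p (fun ω => ∀ j (h : j < i), ω.1 j = cpre j h ∧ ω.2 j = zpre j h) →
      ∑ ci : C i, ∑ zi : Z i,
        (if 0 < prOf p (fun ω => ω.2 i = zi ∧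
              ∀ j (h : j < i), ω.1 j = cpre j h ∧ ω.2 j = zpre j h) then
          F i ci zi cpre zpre *
            (prOf p (fun ω => ω.1 i = ci ∧ ω.2 i = zi ∧
                ∀ j (h : j < i), ω.1 j = cpre j h ∧ ω.2 j = zpre j h) /
              prOf p (fun ω => ω.2 i = zi ∧
                ∀ j (h : j < i), ω.1 j = cpre j h ∧ ω.2 j = zpre j h)) ^ (α - 1) *
            (prOf p (fun ω => ω.1 i = ci ∧ ω.2 i = zi ∧
                ∀ j (h : j < i), ω.1 j = cpre j h ∧ ω.2 j = zpre j h) /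
              prOf p (fun ω => ∀ j (h : j < i), ω.1 j = cpre j h ∧ ω.2 j = zpre j h))
        else 0) ≤ 1) :
    ∑ c : ∀ i, C i, ∑ z : ∀ i, Z i,
      (if 0 < prOf p (fun ω => ω.2 = z) then
        (∏ i, F i (c i) (z i) (fun j _ => c j) (fun j _ => z j)) *
          (p (c, z) / prOf p (fun ω => ω.2 = z)) ^ (α - 1) * p (c, z)
      else 0) ≤ 1 := by
  have claim : ∀ k, k ≤ n → (∑ c, ∑ z, wgt p α F k c z) ≤ bigN C Z k := by
    intro k
    induction k with
    | zero => exact fun _ => le_of_eq (base_eq p α F hp1 hα)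
    | succ k ih =>
      intro hk1
      have hkn : k < n := hk1
      have hih := ih (Nat.le_of_lt hkn)
      have hstep : ((Fintype.card (C ⟨k, hkn⟩) : ℝ) * (Fintype.card (Z ⟨k, hkn⟩) : ℝ)) *
            (∑ c, ∑ z, wgt p α F (k + 1) c z)
          ≤ ∑ c, ∑ z, wgt p α F k c z :=
        step_le p α F hp0 hF0 hMarkov hF ⟨k, hkn⟩
      have hbig : bigN C Z k
          = ((Fintype.card (C ⟨k, hkn⟩) : ℝ) * (Fintype.card (Z ⟨k, hkn⟩) : ℝ)) *
              bigN C Z (k + 1) := bigN_succ ⟨k, hkn⟩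
      have hcpos : (0:ℝ) < (Fintype.card (C ⟨k, hkn⟩) : ℝ) * (Fintype.card (Z ⟨k, hkn⟩) : ℝ) := by
        have h1 : 0 < Fintype.card (C ⟨k, hkn⟩) := Fintype.card_pos
        have h2 : 0 < Fintype.card (Z ⟨k, hkn⟩) := Fintype.card_pos
        positivity
      have hc := le_trans hstep hih
      rw [hbig] at hc
      exact le_of_mul_le_mul_left hc hcpos
  have hfinal : ∀ (c : ∀ i, C i) (z : ∀ i, Z i),
      (if 0 < prOf p (fun ω => ω.2 = z) then
        (∏ i, F i (c i) (z i) (fun j _ => c j) (fun j _ => z j)) *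
          (p (c, z) / prOf p (fun ω => ω.2 = z)) ^ (α - 1) * p (c, z)
      else 0) = wgt p α F n c z := by
    intro c z
    have h1 : prOf p (fun ω => ω.2 = z) = pZ p n z :=
      prOf_congr' p fun ω =>
        ⟨fun h j _ => by rw [h], fun h => funext fun j => h j j.isLt⟩
    have h2 : pCZ p n c z = p (c, z) := by
      rw [show pCZ p n c z = prOf p (fun ω => ω = (c, z)) from
        prOf_congr' p fun ω =>
          ⟨fun H => Prod.ext (funext fun j => (H j j.isLt).1) (funext fun j => (H j j.isLt).2),
           fun h => by subst h; exact fun j _ => ⟨rfl, rfl⟩⟩]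
      exact prOf_single p (c, z)
    have h3 : phi F n c z = ∏ i, F i (c i) (z i) (fun j _ => c j) (fun j _ => z j) :=
      Finset.prod_congr rfl fun j _ => if_pos j.isLt
    rw [h1, ← h3, ← h2]
    rfl
  calc ∑ c : ∀ i, C i, ∑ z : ∀ i, Z i,
        (if 0 < prOf p (fun ω => ω.2 = z) then
          (∏ i, F i (c i) (z i) (fun j _ => c j) (fun j _ => z j)) *
            (p (c, z) / prOf p (fun ω => ω.2 = z)) ^ (α - 1) * p (c, z)
        else 0)
      = ∑ c, ∑ z, wgt p α F n c z :=
        Finset.sum_congr rfl fun c _ => Finset.sum_congr rfl fun z _ => hfinal c z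
    _ ≤ bigN C Z n := claim n le_rfl
    _ = 1 := bigN_n
end

section
/- Let C_1, Z_1, C_2, Z_2 be finite nonempty types, let p be a probability distribution on C_1×Z_1×C_2×Z_2 (the joint law of (C_1,Z_1,C_2,Z_2)), and let α > 1. Assume the Markov condition: for all (c_1,z_1) with P(C_1=c_1, Z_1=z_1) > 0 and all z_2, P(Z_2=z_2 | C_1=c_1, Z_1=z_1) = P(Z_2=z_2 | Z_1=z_1). Let F_1 : C_1×Z_1 → ℝ≥0 satisfy Σ_{(c_1,z_1): P(Z_1=z_1)>0} F_1(c_1,z_1)·P(C_1=c_1|Z_1=z_1)^{α−1}·P(C_1=c_1,Z_1=z_1) ≤ 1, and for every (c_1,z_1) of positive probability let F_2^{(c_1,z_1)} : C_2×Z_2 → ℝ≥0 satisfy Σ_{(c_2,z_2)} F_2^{(c_1,z_1)}(c_2,z_2)·P(C_2=c_2 | Z_2=z_2, C_1=c_1, Z_1=z_1)^{α−1}·P(C_2=c_2, Z_2=z_2 | C_1=c_1, Z_1=z_1) ≤ 1 (sums over terms whose conditioning events have positive probability). Then Σ_{(c_1,z_1,c_2,z_2): P(Z_1=z_1,Z_2=z_2)>0}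 F_1(c_1,z_1)·F_2^{(c_1,z_1)}(c_2,z_2)·P(C_1=c_1, C_2=c_2 | Z_1=z_1, Z_2=z_2)^{α−1}·P(C_1=c_1, Z_1=z_1, C_2=c_2, Z_2=z_2) ≤ 1. -/
open scoped Classical

/-- Two-trial chaining of probability estimation factors (base case of the classical
chaining theorem).  Here `p c₁ z₁ c₂ z₂` is the joint law of `(C₁, Z₁, C₂, Z₂)`.
Under the Markov condition `P(Z₂ = z₂ | C₁ = c₁, Z₁ = z₁) = P(Z₂ = z₂ | Z₁ = z₁)`
(for positive-probability `(c₁, z₁)`), if `F₁` is a PEF with power `α > 1` for the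
first-trial marginal and, for each positive-probability `(c₁, z₁)`,
`F₂ c₁ z₁` is a PEF with power `α` for the second-trial conditional distribution,
then the product `F₁ · F₂` is a PEF with power `α` for the joint distribution. -/
theorem pef_chaining_two_trials
    {C₁ Z₁ C₂ Z₂ : Type*} [Fintype C₁] [Nonempty C₁] [Fintype Z₁] [Nonempty Z₁]
    [Fintype C₂] [Nonempty C₂] [Fintype Z₂] [Nonempty Z₂]
    (p : C₁ → Z₁ → C₂ → Z₂ → ℝ)
    (hp0 : ∀ c₁ z₁ c₂ z₂, 0 ≤ p c₁ z₁ c₂ z₂)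
    (hp1 : ∑ c₁, ∑ z₁, ∑ c₂, ∑ z₂, p c₁ z₁ c₂ z₂ = 1)
    (α : ℝ) (hα : 1 < α)
    (hMarkov : ∀ c₁ z₁, 0 < (∑ c₂, ∑ z₂, p c₁ z₁ c₂ z₂) → ∀ z₂,
      (∑ c₂, p c₁ z₁ c₂ z₂) / (∑ c₂, ∑ z₂', p c₁ z₁ c₂ z₂') =
        (∑ c₁', ∑ c₂, p c₁' z₁ c₂ z₂) / (∑ c₁', ∑ c₂, ∑ z₂', p c₁' z₁ c₂ z₂'))
    (F₁ : C₁ × Z₁ → ℝ) (hF₁0 : ∀ ω, 0 ≤ F₁ ω)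
    (hF₁ : ∑ c₁, ∑ z₁,
      (if 0 < ∑ c₁', ∑ c₂, ∑ z₂, p c₁' z₁ c₂ z₂ then
        F₁ (c₁, z₁) *
          ((∑ c₂, ∑ z₂, p c₁ z₁ c₂ z₂) / ∑ c₁', ∑ c₂, ∑ z₂, p c₁' z₁ c₂ z₂) ^ (α - 1) *
          (∑ c₂, ∑ z₂, p c₁ z₁ c₂ z₂)
      else 0) ≤ 1)
    (F₂ : C₁ → Z₁ → C₂ × Z₂ → ℝ) (hF₂0 : ∀ c₁ z₁ ω, 0 ≤ F₂ c₁ z₁ ω)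
    (hF₂ : ∀ c₁ z₁, 0 < (∑ c₂, ∑ z₂, p c₁ z₁ c₂ z₂) →
      ∑ c₂, ∑ z₂,
        (if 0 < ∑ c₂', p c₁ z₁ c₂' z₂ then
          F₂ c₁ z₁ (c₂, z₂) *
            (p c₁ z₁ c₂ z₂ / ∑ c₂', p c₁ z₁ c₂' z₂) ^ (α - 1) *
            (p c₁ z₁ c₂ z₂ / ∑ c₂', ∑ z₂', p c₁ z₁ c₂' z₂')
        else 0) ≤ 1) :
    ∑ c₁, ∑ z₁, ∑ c₂, ∑ z₂,
      (if 0 < ∑ c₁', ∑ c₂', p c₁' z₁ c₂' z₂ then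
        F₁ (c₁, z₁) * F₂ c₁ z₁ (c₂, z₂) *
          (p c₁ z₁ c₂ z₂ / ∑ c₁', ∑ c₂', p c₁' z₁ c₂' z₂) ^ (α - 1) *
          p c₁ z₁ c₂ z₂
      else 0) ≤ 1 := by

  classical
  have S2 : ∀ a b, (0:ℝ) ≤ ∑ c₂, ∑ z₂, p a b c₂ z₂ := fun a b =>
    Finset.sum_nonneg fun _ _ => Finset.sum_nonneg fun _ _ => hp0 _ _ _ _
  have S1 : ∀ a b z₂, (0:ℝ) ≤ ∑ c₂, p a b c₂ z₂ := fun a b z₂ =>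
    Finset.sum_nonneg fun _ _ => hp0 _ _ _ _
  have SZ : ∀ a b c, (0:ℝ) ≤ ∑ z₂, p a b c z₂ := fun a b c =>
    Finset.sum_nonneg fun _ _ => hp0 _ _ _ _
  have key : ∀ c₁ z₁,
      (∑ c₂, ∑ z₂,
        (if 0 < ∑ c₁', ∑ c₂', p c₁' z₁ c₂' z₂ then
          F₁ (c₁, z₁) * F₂ c₁ z₁ (c₂, z₂) *
            (p c₁ z₁ c₂ z₂ / ∑ c₁', ∑ c₂', p c₁' z₁ c₂' z₂) ^ (α - 1) *
            p c₁ z₁ c₂ z₂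
        else 0)) ≤
      (if 0 < ∑ c₁', ∑ c₂, ∑ z₂, p c₁' z₁ c₂ z₂ then
        F₁ (c₁, z₁) *
          ((∑ c₂, ∑ z₂, p c₁ z₁ c₂ z₂) / ∑ c₁', ∑ c₂, ∑ z₂, p c₁' z₁ c₂ z₂) ^ (α - 1) *
          (∑ c₂, ∑ z₂, p c₁ z₁ c₂ z₂)
      else 0) := by
    intro c₁ z₁
    by_cases hA : 0 < ∑ c₂, ∑ z₂, p c₁ z₁ c₂ z₂
    · have hB : 0 < ∑ c₁', ∑ c₂, ∑ z₂, p c₁' z₁ c₂ z₂ :=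
        lt_of_lt_of_le hA (Finset.single_le_sum
          (f := fun c₁' => ∑ c₂, ∑ z₂, p c₁' z₁ c₂ z₂)
          (fun i _ => S2 i z₁) (Finset.mem_univ c₁))
      rw [if_pos hB]
      have hterm : ∀ c₂ z₂,
          (if 0 < ∑ c₁', ∑ c₂', p c₁' z₁ c₂' z₂ then
            F₁ (c₁, z₁) * F₂ c₁ z₁ (c₂, z₂) *
              (p c₁ z₁ c₂ z₂ / ∑ c₁', ∑ c₂', p c₁' z₁ c₂' z₂) ^ (α - 1) *
              p c₁ z₁ c₂ z₂
          else 0) =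
          (F₁ (c₁, z₁) *
            ((∑ c₂, ∑ z₂, p c₁ z₁ c₂ z₂) / ∑ c₁', ∑ c₂, ∑ z₂, p c₁' z₁ c₂ z₂) ^ (α - 1) *
            (∑ c₂, ∑ z₂, p c₁ z₁ c₂ z₂)) *
          (if 0 < ∑ c₂', p c₁ z₁ c₂' z₂ then
            F₂ c₁ z₁ (c₂, z₂) *
              (p c₁ z₁ c₂ z₂ / ∑ c₂', p c₁ z₁ c₂' z₂) ^ (α - 1) *
              (p c₁ z₁ c₂ z₂ / ∑ c₂', ∑ z₂', p c₁ z₁ c₂' z₂')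
          else 0) := by
        intro c₂ z₂
        by_cases hs : 0 < ∑ c₂', p c₁ z₁ c₂' z₂
        · have hq : 0 < ∑ c₁', ∑ c₂', p c₁' z₁ c₂' z₂ :=
            lt_of_lt_of_le hs (Finset.single_le_sum
              (f := fun c₁' => ∑ c₂', p c₁' z₁ c₂' z₂)
              (fun i _ => S1 i z₁ z₂) (Finset.mem_univ c₁))
          rw [if_pos hq, if_pos hs]
          have hM := hMarkov c₁ z₁ hA z₂
          have hcross : (∑ c₂', p c₁ z₁ c₂' z₂) * (∑ c₁', ∑ c₂, ∑ z₂, p c₁' z₁ c₂ z₂)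
              = (∑ c₁', ∑ c₂', p c₁' z₁ c₂' z₂) * (∑ c₂, ∑ z₂, p c₁ z₁ c₂ z₂) :=
            (div_eq_div_iff hA.ne' hB.ne').mp hM
          have hdiv : p c₁ z₁ c₂ z₂ / (∑ c₁', ∑ c₂', p c₁' z₁ c₂' z₂)
              = ((∑ c₂, ∑ z₂, p c₁ z₁ c₂ z₂) / (∑ c₁', ∑ c₂, ∑ z₂, p c₁' z₁ c₂ z₂)) *
                (p c₁ z₁ c₂ z₂ / (∑ c₂', p c₁ z₁ c₂' z₂)) := by
            rw [div_mul_div_comm, div_eq_div_iff hq.ne' (mul_pos hB hs).ne']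
            linear_combination (p c₁ z₁ c₂ z₂) * hcross
          rw [hdiv, Real.mul_rpow (div_nonneg (S2 c₁ z₁) hB.le) (div_nonneg (hp0 c₁ z₁ c₂ z₂) hs.le)]
          field_simp
        · have hs0 : (∑ c₂', p c₁ z₁ c₂' z₂) = 0 :=
            le_antisymm (not_lt.mp hs) (S1 c₁ z₁ z₂)
          have hp : p c₁ z₁ c₂ z₂ = 0 := by
            have h1 : p c₁ z₁ c₂ z₂ ≤ ∑ c₂', p c₁ z₁ c₂' z₂ :=
              Finset.single_le_sum (fun i _ => hp0 c₁ z₁ i z₂) (Finset.mem_univ c₂)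
            have := hp0 c₁ z₁ c₂ z₂
            linarith
          simp [hp, hs0]
      calc (∑ c₂, ∑ z₂,
          (if 0 < ∑ c₁', ∑ c₂', p c₁' z₁ c₂' z₂ then
            F₁ (c₁, z₁) * F₂ c₁ z₁ (c₂, z₂) *
              (p c₁ z₁ c₂ z₂ / ∑ c₁', ∑ c₂', p c₁' z₁ c₂' z₂) ^ (α - 1) *
              p c₁ z₁ c₂ z₂
          else 0))
          = (F₁ (c₁, z₁) *
              ((∑ c₂, ∑ z₂, p c₁ z₁ c₂ z₂) / ∑ c₁', ∑ c₂, ∑ z₂, p c₁' z₁ c₂ z₂) ^ (α - 1) *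
              (∑ c₂, ∑ z₂, p c₁ z₁ c₂ z₂)) *
            (∑ c₂, ∑ z₂,
              (if 0 < ∑ c₂', p c₁ z₁ c₂' z₂ then
                F₂ c₁ z₁ (c₂, z₂) *
                  (p c₁ z₁ c₂ z₂ / ∑ c₂', p c₁ z₁ c₂' z₂) ^ (α - 1) *
                  (p c₁ z₁ c₂ z₂ / ∑ c₂', ∑ z₂', p c₁ z₁ c₂' z₂')
              else 0)) := by
            rw [Finset.mul_sum]
            refine Finset.sum_congr rfl fun c₂ _ => ?_
            rw [Finset.mul_sum]
            exact Finset.sum_congr rfl fun z₂ _ => hterm c₂ z₂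
        _ ≤ (F₁ (c₁, z₁) *
              ((∑ c₂, ∑ z₂, p c₁ z₁ c₂ z₂) / ∑ c₁', ∑ c₂, ∑ z₂, p c₁' z₁ c₂ z₂) ^ (α - 1) *
              (∑ c₂, ∑ z₂, p c₁ z₁ c₂ z₂)) * 1 := by
            refine mul_le_mul_of_nonneg_left (hF₂ c₁ z₁ hA) ?_
            exact mul_nonneg (mul_nonneg (hF₁0 (c₁, z₁))
              (Real.rpow_nonneg (div_nonneg (S2 c₁ z₁) hB.le) _)) (S2 c₁ z₁)
        _ = _ := mul_one _
    · have hA0 : (∑ c₂, ∑ z₂, p c₁ z₁ c₂ z₂) = 0 :=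
        le_antisymm (not_lt.mp hA) (S2 c₁ z₁)
      have hp : ∀ c₂ z₂, p c₁ z₁ c₂ z₂ = 0 := by
        intro c₂ z₂
        have h1 : p c₁ z₁ c₂ z₂ ≤ ∑ z₂', p c₁ z₁ c₂ z₂' :=
          Finset.single_le_sum (fun i _ => hp0 c₁ z₁ c₂ i) (Finset.mem_univ z₂)
        have h2 : (∑ z₂', p c₁ z₁ c₂ z₂') ≤ ∑ c₂, ∑ z₂, p c₁ z₁ c₂ z₂ :=
          Finset.single_le_sum (f := fun c₂ => ∑ z₂, p c₁ z₁ c₂ z₂)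
            (fun i _ => SZ c₁ z₁ i) (Finset.mem_univ c₂)
        have := hp0 c₁ z₁ c₂ z₂
        linarith
      simp [hp, hA0]
  exact le_trans
    (Finset.sum_le_sum fun c₁ _ => Finset.sum_le_sum fun z₁ _ => key c₁ z₁) hF₁
end

section
/- Let C and Z be finite nonempty types, let p be a probability distribution on C×Z, let α > 1, and let F : C×Z → ℝ≥0 satisfy the PEF inequality Σ_{(c,z): p(z)>0} F(c,z)·p(c|z)^{α−1}·p(c,z) ≤ 1. Then for every ε ∈ (0,1] and every real h, the probability under p of the event { (c,z) : p(z) > 0, F(c,z) ≥ 2^{(α−1)h} and p(c|z) > ε^{−1/(α−1)}·2^{−h} } is at most ε. -/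
open scoped Classical

/-- Core randomness-certification bound for probability estimation factors against
classical side information: if `F` is a PEF with power `α > 1` for the distribution
`p` on `C × Z`, then for any `ε ∈ (0,1]` and any real `h`, the probability of the
event that `F(c,z) ≥ 2^((α-1)h)` while `p(c|z) > ε^(-1/(α-1)) · 2^(-h)` is at
most `ε`.  Here `p(c|z) = p(c,z) / p(z)` with `p(z) = ∑ c, p (c,z)`. -/
theorem pef_certification {C Z : Type*} [Fintype C] [Nonempty C]
    [Fintype Z] [Nonempty Z]
    (p : C × Z → ℝ) (hp0 : ∀ ω, 0 ≤ p ω) (hp1 : ∑ ω, p ω = 1)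
    (α : ℝ) (hα : 1 < α)
    (F : C × Z → ℝ) (hF0 : ∀ ω, 0 ≤ F ω)
    (hF : ∑ c, ∑ z, (if 0 < ∑ c', p (c', z) then
        F (c, z) * (p (c, z) / ∑ c', p (c', z)) ^ (α - 1) * p (c, z) else 0) ≤ 1)
    (ε : ℝ) (hε0 : 0 < ε) (hε1 : ε ≤ 1) (h : ℝ) :
    ∑ c, ∑ z, (if (0 < ∑ c', p (c', z)) ∧ (2 : ℝ) ^ ((α - 1) * h) ≤ F (c, z) ∧
          ε ^ (-(1 / (α - 1))) * (2 : ℝ) ^ (-h) < p (c, z) / ∑ c', p (c', z)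
        then p (c, z) else 0) ≤ ε := by
  have hα1 : (0 : ℝ) < α - 1 := by linarith
  have key : ∀ c z, (if (0 < ∑ c', p (c', z)) ∧ (2 : ℝ) ^ ((α - 1) * h) ≤ F (c, z) ∧
          ε ^ (-(1 / (α - 1))) * (2 : ℝ) ^ (-h) < p (c, z) / ∑ c', p (c', z)
        then p (c, z) else 0) ≤
      ε * (if 0 < ∑ c', p (c', z) then
        F (c, z) * (p (c, z) / ∑ c', p (c', z)) ^ (α - 1) * p (c, z) else 0) := by
    intro c z
    by_cases hev : (0 < ∑ c', p (c', z)) ∧ (2 : ℝ) ^ ((α - 1) * h) ≤ F (c, z) ∧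
          ε ^ (-(1 / (α - 1))) * (2 : ℝ) ^ (-h) < p (c, z) / ∑ c', p (c', z)
    · rw [if_pos hev, if_pos hev.1]
      obtain ⟨hq, hFb, hr⟩ := hev
      set r := p (c, z) / ∑ c', p (c', z) with hrdef
      set A := ε ^ (-(1 / (α - 1))) * (2 : ℝ) ^ (-h) with hAdef
      have hA0 : 0 ≤ A := by
        apply mul_nonneg (Real.rpow_nonneg hε0.le _) (Real.rpow_nonneg (by norm_num) _)
      have hrA : A ^ (α - 1) ≤ r ^ (α - 1) :=
        Real.rpow_le_rpow hA0 hr.le hα1.le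
      have hApow : A ^ (α - 1) = ε⁻¹ * (2 : ℝ) ^ (-((α - 1) * h)) := by
        rw [hAdef, Real.mul_rpow (Real.rpow_nonneg hε0.le _) (Real.rpow_nonneg (by norm_num) _),
          ← Real.rpow_mul hε0.le, ← Real.rpow_mul (by norm_num : (0:ℝ) ≤ 2)]
        have hne : α - 1 ≠ 0 := hα1.ne'
        have e1 : -(1 / (α - 1)) * (α - 1) = -1 := by field_simp
        have e2 : -h * (α - 1) = -((α - 1) * h) := by ring
        rw [e1, e2, Real.rpow_neg_one]
      -- 1 ≤ ε * F * r^(α-1)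
      have h2 : (0 : ℝ) < (2 : ℝ) ^ ((α - 1) * h) := Real.rpow_pos_of_pos (by norm_num) _
      have h1 : (1 : ℝ) ≤ ε * (F (c, z) * r ^ (α - 1)) := by
        have : (2 : ℝ) ^ ((α - 1) * h) * (ε⁻¹ * (2 : ℝ) ^ (-((α - 1) * h))) ≤
            F (c, z) * r ^ (α - 1) := by
          exact mul_le_mul hFb (by rw [← hApow]; exact hrA)
            (mul_nonneg (inv_nonneg.mpr hε0.le) (Real.rpow_nonneg (by norm_num) _)) (hF0 _)
        have h2e : (2 : ℝ) ^ ((α - 1) * h) * (2 : ℝ) ^ (-((α - 1) * h)) = 1 := by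
          rw [← Real.rpow_add (by norm_num)]; simp
        calc (1 : ℝ) = ε * ((2 : ℝ) ^ ((α - 1) * h) * (ε⁻¹ * (2 : ℝ) ^ (-((α - 1) * h)))) := by
              field_simp [hε0.ne']; nlinarith [h2e]
          _ ≤ ε * (F (c, z) * r ^ (α - 1)) := by
              exact mul_le_mul_of_nonneg_left this hε0.le
      calc p (c, z) = 1 * p (c, z) := (one_mul _).symm
        _ ≤ (ε * (F (c, z) * r ^ (α - 1))) * p (c, z) :=
            mul_le_mul_of_nonneg_right h1 (hp0 _)
        _ = ε * (F (c, z) * r ^ (α - 1) * p (c, z)) := by ring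
    · rw [if_neg hev]
      by_cases hq : 0 < ∑ c', p (c', z)
      · rw [if_pos hq]
        have : 0 ≤ F (c, z) * (p (c, z) / ∑ c', p (c', z)) ^ (α - 1) * p (c, z) := by
          exact mul_nonneg (mul_nonneg (hF0 _) (Real.rpow_nonneg
            (div_nonneg (hp0 _) (Finset.sum_nonneg fun c' _ => hp0 _)) _)) (hp0 _)
        exact mul_nonneg hε0.le this
      · rw [if_neg hq]; simp
  calc ∑ c, ∑ z, (if (0 < ∑ c', p (c', z)) ∧ (2 : ℝ) ^ ((α - 1) * h) ≤ F (c, z) ∧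
          ε ^ (-(1 / (α - 1))) * (2 : ℝ) ^ (-h) < p (c, z) / ∑ c', p (c', z)
        then p (c, z) else 0)
      ≤ ∑ c, ∑ z, ε * (if 0 < ∑ c', p (c', z) then
        F (c, z) * (p (c, z) / ∑ c', p (c', z)) ^ (α - 1) * p (c, z) else 0) := by
        apply Finset.sum_le_sum; intro c _
        apply Finset.sum_le_sum; intro z _
        exact key c z
    _ = ε * ∑ c, ∑ z, (if 0 < ∑ c', p (c', z) then
        F (c, z) * (p (c, z) / ∑ c', p (c', z)) ^ (α - 1) * p (c, z) else 0) := by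
        rw [Finset.mul_sum]
        exact Finset.sum_congr rfl fun c _ => (Finset.mul_sum _ _ _).symm
    _ ≤ ε * 1 := mul_le_mul_of_nonneg_left hF hε0.le
    _ = ε := mul_one ε
end

section
/- Let C and Z be finite nonempty types, let p be a probability distribution on C×Z, let α > 1, and let F : C×Z → ℝ≥0 satisfy Σ_{(c,z): p(z)>0} F(c,z)·p(c|z)^{α−1}·p(c,z) ≤ 1. Let h be real, γ ∈ (0,1], ε ∈ (0,1], and let S ⊆ C×Z be an event with p(S) ≥ γ such that F(c,z) ≥ 2^{(α−1)h} for every (c,z) ∈ S. Then the conditional probability, given S, of the event { (c,z) : p(z) > 0 and p(c|z) > (εγ)^{−1/(α−1)}·2^{−h} } is at most ε. -/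
open scoped Classical

/-- Classical analog of Theorem 4.18 of Knill–Zhang–Bierhorst: if `F` is a PEF with
power `α > 1` for the distribution `p` on `C × Z`, and `S` is a success event of
probability at least `γ` on which `F ≥ 2^((α-1)h)`, then, conditioned on `S`, the
probability that `p(c|z) > (εγ)^(-1/(α-1)) · 2^(-h)` is at most `ε`. -/
theorem pef_certification_conditioned {C Z : Type*} [Fintype C] [Nonempty C]
    [Fintype Z] [Nonempty Z]
    (p : C × Z → ℝ) (hp0 : ∀ ω, 0 ≤ p ω) (hp1 : ∑ ω, p ω = 1)
    (α : ℝ) (hα : 1 < α)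
    (F : C × Z → ℝ) (hF0 : ∀ ω, 0 ≤ F ω)
    (hF : ∑ c, ∑ z, (if 0 < ∑ c', p (c', z) then
        F (c, z) * (p (c, z) / ∑ c', p (c', z)) ^ (α - 1) * p (c, z) else 0) ≤ 1)
    (h γ ε : ℝ) (hγ0 : 0 < γ) (hγ1 : γ ≤ 1) (hε0 : 0 < ε) (hε1 : ε ≤ 1)
    (S : C × Z → Prop) (hSγ : γ ≤ prOf p S)
    (hSF : ∀ ω, S ω → (2 : ℝ) ^ ((α - 1) * h) ≤ F ω) :
    prOf p (fun ω => (0 < ∑ c', p (c', ω.2)) ∧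
        (ε * γ) ^ (-(1 / (α - 1))) * (2 : ℝ) ^ (-h) < p ω / ∑ c', p (c', ω.2) ∧ S ω) /
      prOf p S ≤ ε := by
  have hεγ : (0 : ℝ) < ε * γ := mul_pos hε0 hγ0
  have hα1 : (0 : ℝ) < α - 1 := by linarith
  set t : ℝ := (ε * γ) ^ (-(1 / (α - 1))) * (2 : ℝ) ^ (-h) with ht
  have ht0 : 0 < t :=
    mul_pos (Real.rpow_pos_of_pos hεγ _) (Real.rpow_pos_of_pos two_pos _)
  have htpow : (2 : ℝ) ^ ((α - 1) * h) * t ^ (α - 1) = (ε * γ)⁻¹ := by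
    rw [ht, Real.mul_rpow (Real.rpow_nonneg hεγ.le _) (Real.rpow_nonneg two_pos.le _),
      ← Real.rpow_mul hεγ.le, ← Real.rpow_mul two_pos.le]
    have e1 : -(1 / (α - 1)) * (α - 1) = -1 := by field_simp
    have e2 : (α - 1) * h + -h * (α - 1) = 0 := by ring
    rw [e1, mul_comm ((ε * γ) ^ (-1 : ℝ)), ← mul_assoc, ← Real.rpow_add two_pos, e2,
      Real.rpow_zero, one_mul, Real.rpow_neg_one]
  have hPT : prOf p (fun ω => (0 < ∑ c', p (c', ω.2)) ∧
      t < p ω / ∑ c', p (c', ω.2) ∧ S ω) ≤ ε * γ := by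
    have step : ∀ ω : C × Z, ∀ _inst : Decidable ((0 < ∑ c', p (c', ω.2)) ∧
        t < p ω / ∑ c', p (c', ω.2) ∧ S ω), (if ((0 < ∑ c', p (c', ω.2)) ∧
        t < p ω / ∑ c', p (c', ω.2) ∧ S ω) then p ω else 0) ≤
        (ε * γ) * (if 0 < ∑ c', p (c', ω.2) then
          F ω * (p ω / ∑ c', p (c', ω.2)) ^ (α - 1) * p ω else 0) := by
      intro ω _inst
      split_ifs with hω hz hz
      · obtain ⟨hz', hconv, hS⟩ := hω
        have h1 : (2 : ℝ) ^ ((α - 1) * h) * t ^ (α - 1) * p ω ≤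
            F ω * (p ω / ∑ c', p (c', ω.2)) ^ (α - 1) * p ω := by
          apply mul_le_mul_of_nonneg_right _ (hp0 ω)
          exact mul_le_mul (hSF ω hS) (Real.rpow_le_rpow ht0.le hconv.le hα1.le)
            (Real.rpow_nonneg ht0.le _) (hF0 ω)
        rw [htpow] at h1
        calc p ω = (ε * γ) * ((ε * γ)⁻¹ * p ω) := by field_simp
        _ ≤ (ε * γ) * (F ω * (p ω / ∑ c', p (c', ω.2)) ^ (α - 1) * p ω) :=
            mul_le_mul_of_nonneg_left h1 hεγ.le
      · exact absurd hω.1 hz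
      · have : 0 ≤ F ω * (p ω / ∑ c', p (c', ω.2)) ^ (α - 1) * p ω := by
          apply mul_nonneg (mul_nonneg (hF0 ω) (Real.rpow_nonneg
            (div_nonneg (hp0 ω) (le_of_lt hz)) _)) (hp0 ω)
        nlinarith
      · simp
    calc prOf p (fun ω => (0 < ∑ c', p (c', ω.2)) ∧
          t < p ω / ∑ c', p (c', ω.2) ∧ S ω)
        ≤ ∑ ω : C × Z, (ε * γ) * (if 0 < ∑ c', p (c', ω.2) then
          F ω * (p ω / ∑ c', p (c', ω.2)) ^ (α - 1) * p ω else 0) :=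
        Finset.sum_le_sum fun ω _ => step ω _
      _ = (ε * γ) * ∑ ω : C × Z, (if 0 < ∑ c', p (c', ω.2) then
          F ω * (p ω / ∑ c', p (c', ω.2)) ^ (α - 1) * p ω else 0) := by
        rw [Finset.mul_sum]
      _ ≤ (ε * γ) * 1 := by
        apply mul_le_mul_of_nonneg_left _ hεγ.le
        rw [Fintype.sum_prod_type]
        exact hF
      _ = ε * γ := mul_one _
  have hPS : 0 < prOf p S := lt_of_lt_of_le hγ0 hSγ
  have hdiv : prOf p (fun ω => (0 < ∑ c', p (c', ω.2)) ∧
      t < p ω / ∑ c', p (c', ω.2) ∧ S ω) / prOf p S ≤ (ε * γ) / γ :=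
    div_le_div₀ hεγ.le hPT hγ0 hSγ
  have : (ε * γ) / γ = ε := by field_simp
  rw [this] at hdiv
  exact hdiv
end

section
/- Let C and Z be finite nonempty types, let α > 1, and let F : C×Z → ℝ≥0. Let p_1,…,p_K be finitely many probability distributions on C×Z, each with strictly positive input marginal (p_k(z) > 0 for all z and all k), and suppose F satisfies the PEF inequality Σ_{(c,z)} F(c,z)·p_k(c|z)^{α−1}·p_k(c,z) ≤ 1 for every k = 1,…,K. Then for every convex combination p = Σ_k λ_k p_k (λ_k ≥ 0, Σ_k λ_k = 1), F also satisfies Σ_{(c,z)} F(c,z)·p(c|z)^{α−1}·p(c,z) ≤ 1. -/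
open Finset

private lemma pef_pow_mul (α : ℝ) (hα : 1 < α) :
    ∀ x : ℝ, 0 ≤ x → x ^ (α - 1) * x = x ^ α := by
  intro x hx
  rcases hx.eq_or_lt with h | h
  · rw [← h, Real.zero_rpow (by linarith), Real.zero_rpow (by linarith), zero_mul]
  · have := Real.rpow_add_one h.ne' (α - 1)
    rw [sub_add_cancel] at this
    rw [this]

private lemma pef_key {K : ℕ} (α : ℝ) (hα : 1 < α) (lam p q : Fin K → ℝ)
    (hlam0 : ∀ k, 0 ≤ lam k) (hlam1 : ∑ k, lam k = 1)
    (hp : ∀ k, 0 ≤ p k) (hq : ∀ k, 0 < q k) :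
    ((∑ k, lam k * p k) / (∑ k, lam k * q k)) ^ (α - 1) * (∑ k, lam k * p k)
      ≤ ∑ k, lam k * ((p k / q k) ^ (α - 1) * p k) := by
  set P := ∑ k, lam k * p k with hP
  set Q := ∑ k, lam k * q k with hQ
  have hPnn : 0 ≤ P := sum_nonneg fun k _ => mul_nonneg (hlam0 k) (hp k)
  have hQpos : 0 < Q := by
    obtain ⟨k, hk⟩ : ∃ k, lam k ≠ 0 := by
      by_contra h
      push_neg at h
      simp [h] at hlam1
    exact sum_pos' (fun j _ => mul_nonneg (hlam0 j) (hq j).le)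
      ⟨k, mem_univ k, mul_pos ((hlam0 k).lt_of_ne (Ne.symm hk)) (hq k)⟩
  have hconv : ∀ a b : ℝ, 0 ≤ a → 0 < b →
      (a / b) ^ (α - 1) * a = (a / b) ^ α * b := by
    intro a b ha hb
    rw [← pef_pow_mul α hα (a / b) (div_nonneg ha hb.le), mul_assoc,
      div_mul_cancel₀ a hb.ne']
  have hw1 : ∑ k, lam k * q k / Q = 1 := by
    rw [← sum_div, ← hQ, div_self hQpos.ne']
  have key := Real.rpow_arith_mean_le_arith_mean_rpow univ
    (fun k => lam k * q k / Q) (fun k => p k / q k)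
    (fun k _ => div_nonneg (mul_nonneg (hlam0 k) (hq k).le) hQpos.le) hw1
    (fun k _ => div_nonneg (hp k) (hq k).le) hα.le
  have hsum : ∑ k, lam k * q k / Q * (p k / q k) = P / Q := by
    rw [hP, sum_div]
    refine sum_congr rfl fun k _ => ?_
    field_simp [(hq k).ne']
  rw [hsum] at key
  have key2 : (P / Q) ^ α * Q ≤ ∑ k, lam k * q k * (p k / q k) ^ α := by
    have h := mul_le_mul_of_nonneg_right key hQpos.le
    rw [sum_mul] at h
    refine h.trans_eq (sum_congr rfl fun k _ => ?_)
    field_simp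
  calc (P / Q) ^ (α - 1) * P = (P / Q) ^ α * Q := hconv P Q hPnn hQpos
    _ ≤ ∑ k, lam k * q k * (p k / q k) ^ α := key2
    _ = ∑ k, lam k * ((p k / q k) ^ (α - 1) * p k) := by
        refine sum_congr rfl fun k _ => ?_
        rw [hconv (p k) (q k) (hp k) (hq k)]
        ring

/-- Convexity of the probability-estimation-factor property: if `F` is a PEF with
power `α > 1` for each of the finitely many probability distributions `P_1, …, P_K`
on `C × Z`, each with strictly positive input marginal, then `F` is a PEF with
power `α` for every convex combination of them.  Here `p(c|z) = p(c,z) / p(z)`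
with `p(z) = ∑ c, p(c,z)`. -/
theorem pef_convex_combination {C Z : Type*} [Fintype C] [Nonempty C]
    [Fintype Z] [Nonempty Z]
    (α : ℝ) (hα : 1 < α)
    (F : C × Z → ℝ) (hF0 : ∀ ω, 0 ≤ F ω)
    (K : ℕ) (hK : 1 ≤ K)
    (P : Fin K → C × Z → ℝ)
    (hP0 : ∀ k ω, 0 ≤ P k ω) (hP1 : ∀ k, ∑ ω, P k ω = 1)
    (hPz : ∀ k z, 0 < ∑ c, P k (c, z))
    (hPEF : ∀ k,
      ∑ c, ∑ z, F (c, z) * (P k (c, z) / ∑ c', P k (c', z)) ^ (α - 1) * P k (c, z) ≤ 1)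
    (lam : Fin K → ℝ) (hlam0 : ∀ k, 0 ≤ lam k) (hlam1 : ∑ k, lam k = 1) :
    ∑ c, ∑ z, F (c, z) *
        ((∑ k, lam k * P k (c, z)) / ∑ c', ∑ k, lam k * P k (c', z)) ^ (α - 1) *
        (∑ k, lam k * P k (c, z)) ≤ 1 := by
  calc ∑ c, ∑ z, F (c, z) *
        ((∑ k, lam k * P k (c, z)) / ∑ c', ∑ k, lam k * P k (c', z)) ^ (α - 1) *
        (∑ k, lam k * P k (c, z))
      ≤ ∑ c, ∑ z, ∑ k, lam k *
          (F (c, z) * (P k (c, z) / ∑ c', P k (c', z)) ^ (α - 1) * P k (c, z)) := by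
        refine sum_le_sum fun c _ => sum_le_sum fun z _ => ?_
        have hden : (∑ c', ∑ k, lam k * P k (c', z)) = ∑ k, lam k * ∑ c', P k (c', z) := by
          rw [Finset.sum_comm]
          exact sum_congr rfl fun k _ => (mul_sum _ _ _).symm
        rw [hden]
        have key := pef_key α hα lam (fun k => P k (c, z)) (fun k => ∑ c', P k (c', z))
          hlam0 hlam1 (fun k => hP0 k (c, z)) (fun k => hPz k z)
        calc F (c, z) * ((∑ k, lam k * P k (c, z)) / ∑ k, lam k * ∑ c', P k (c', z)) ^ (α - 1) *
              (∑ k, lam k * P k (c, z))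
            = F (c, z) * (((∑ k, lam k * P k (c, z)) / ∑ k, lam k * ∑ c', P k (c', z)) ^ (α - 1) *
              (∑ k, lam k * P k (c, z))) := by ring
          _ ≤ F (c, z) * ∑ k, lam k *
              ((P k (c, z) / ∑ c', P k (c', z)) ^ (α - 1) * P k (c, z)) :=
            mul_le_mul_of_nonneg_left key (hF0 (c, z))
          _ = ∑ k, lam k *
              (F (c, z) * (P k (c, z) / ∑ c', P k (c', z)) ^ (α - 1) * P k (c, z)) := by
            rw [mul_sum]
            exact sum_congr rfl fun k _ => by ring
    _ = ∑ k, lam k * ∑ c, ∑ z,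
          F (c, z) * (P k (c, z) / ∑ c', P k (c', z)) ^ (α - 1) * P k (c, z) := by
        rw [show (∑ c, ∑ z, ∑ k, lam k *
            (F (c, z) * (P k (c, z) / ∑ c', P k (c', z)) ^ (α - 1) * P k (c, z)))
            = ∑ k, ∑ c, ∑ z, lam k *
            (F (c, z) * (P k (c, z) / ∑ c', P k (c', z)) ^ (α - 1) * P k (c, z)) from
          (sum_congr rfl fun c _ => Finset.sum_comm).trans Finset.sum_comm]
        exact sum_congr rfl fun k _ => by simp_rw [← mul_sum]
    _ ≤ ∑ k, lam k * 1 :=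
        sum_le_sum fun k _ => mul_le_mul_of_nonneg_left (hPEF k) (hlam0 k)
    _ = 1 := by simp [hlam1]
end

section
/- Let α ≥ 1 be real, let φ ∈ (0, π/2], let ψ ∈ [0, φ], and let f_1, f_2 ≥ 0 be real numbers. Then (sin(φ−ψ) + sin ψ)^{α−1} · (sin(φ−ψ)·f_1 + sin ψ·f_2) / (sin φ)^α ≤ (φ / sin φ)^α · max(f_1, f_2). -/
open Real

/-- Second inequality of Lemma 8.3 of Knill–Zhang–Bierhorst: for `α ≥ 1`,
`φ ∈ (0, π/2]`, `ψ ∈ [0, φ]` and nonnegative reals `f₁, f₂`,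
`(sin(φ-ψ) + sin ψ)^(α-1) * (sin(φ-ψ) * f₁ + sin ψ * f₂) / (sin φ)^α
  ≤ (φ / sin φ)^α * max f₁ f₂`. -/
theorem chord_bound_max (α : ℝ) (hα : 1 ≤ α) (φ : ℝ) (hφ0 : 0 < φ) (hφ : φ ≤ π / 2)
    (ψ : ℝ) (hψ0 : 0 ≤ ψ) (hψφ : ψ ≤ φ) (f₁ f₂ : ℝ) (hf₁ : 0 ≤ f₁) (hf₂ : 0 ≤ f₂) :
    (Real.sin (φ - ψ) + Real.sin ψ) ^ (α - 1) *
        (Real.sin (φ - ψ) * f₁ + Real.sin ψ * f₂) / Real.sin φ ^ α ≤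
      (φ / Real.sin φ) ^ α * max f₁ f₂ := by
  have hsφ : 0 < Real.sin φ := Real.sin_pos_of_pos_of_lt_pi hφ0 (by linarith [Real.pi_pos])
  have h1 : 0 ≤ Real.sin (φ - ψ) := Real.sin_nonneg_of_nonneg_of_le_pi (by linarith)
    (by linarith [Real.pi_pos])
  have h2 : 0 ≤ Real.sin ψ := Real.sin_nonneg_of_nonneg_of_le_pi hψ0
    (by linarith [Real.pi_pos])
  set s := Real.sin (φ - ψ) + Real.sin ψ with hs_def
  have hs : 0 < s := by
    rcases eq_or_lt_of_le hψ0 with h | h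
    · rw [hs_def, ← h]
      simpa using hsφ
    · have : 0 < Real.sin ψ := Real.sin_pos_of_pos_of_lt_pi h (by nlinarith [Real.pi_pos])
      positivity
  set M := max f₁ f₂ with hM_def
  have hM : 0 ≤ M := le_trans hf₁ (le_max_left _ _)
  have hstep1 : Real.sin (φ - ψ) * f₁ + Real.sin ψ * f₂ ≤ s * M := by
    have := mul_le_mul_of_nonneg_left (le_max_left f₁ f₂) h1
    have := mul_le_mul_of_nonneg_left (le_max_right f₁ f₂) h2
    simp only [hs_def]; nlinarith
  have hsφ' : s ≤ φ := by
    have a1 := Real.sin_le (show 0 ≤ φ - ψ by linarith)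
    have a2 := Real.sin_le hψ0
    simp only [hs_def]; linarith
  have key : s ^ (α - 1) * (Real.sin (φ - ψ) * f₁ + Real.sin ψ * f₂) ≤ s ^ α * M := by
    calc s ^ (α - 1) * (Real.sin (φ - ψ) * f₁ + Real.sin ψ * f₂)
        ≤ s ^ (α - 1) * (s * M) := by
          exact mul_le_mul_of_nonneg_left hstep1 (Real.rpow_nonneg hs.le _)
      _ = s ^ α * M := by
          rw [← mul_assoc, ← Real.rpow_add_one hs.ne' (α - 1)]; ring_nf
  have hdiv : s ^ α * M / Real.sin φ ^ α ≤ (φ / Real.sin φ) ^ α * M := by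
    have e1 : s ^ α * M / Real.sin φ ^ α = (s / Real.sin φ) ^ α * M := by
      rw [Real.div_rpow hs.le hsφ.le]; ring
    rw [e1]
    have h2 : (s / Real.sin φ) ^ α ≤ (φ / Real.sin φ) ^ α :=
      Real.rpow_le_rpow (by positivity) (by gcongr) (by linarith)
    exact mul_le_mul_of_nonneg_right h2 hM
  calc s ^ (α - 1) * (Real.sin (φ - ψ) * f₁ + Real.sin ψ * f₂) / Real.sin φ ^ α
      ≤ s ^ α * M / Real.sin φ ^ α := by gcongr
    _ ≤ (φ / Real.sin φ) ^ α * M := hdiv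
end
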